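/- Let α > 0 and let c : ℕ → ℝ satisfy c 2 > 0 and the analytic growth condition with constant α. Let h : ℝ → ℝ be convex on [0,1] with h(0) = 0 and h(s) ≥ 0 for all s ∈ [0,1], and suppose that for every s ∈ [0,1] at which the series ∑_{k≥2} c_k·s^k/k! converges absolutely, one has h(s) = ∑_{k=2}^∞ c_k·s^k/k!. If h(1) ≤ 1/(65·α²) or c 2 ≤ 1/(16·α²), then (1/4)·(c 2) ≤ h(1) ≤ (3/4)·(c 2). -/

import Mathlib

lemma asc_bound_term (α : ℝ) (hα : 0 < α) (c : ℕ → ℝ) (hc2 : 0 < c 2)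
    (hgrowth : ∀ k : ℕ, 3 ≤ k →
      |c k| ≤ (1 / 2) * (k.factorial : ℝ) * α ^ (k - 2) * (c 2) ^ ((k : ℝ) / 2))
    (s : ℝ) (hs0 : 0 ≤ s) (hβ : α * Real.sqrt (c 2) * s ≤ 1 / 4) (k : ℕ) :
    |c (k + 2) * s ^ (k + 2) / ((k + 2).factorial : ℝ)| ≤ (c 2 * s ^ 2 / 2) * (1 / 4) ^ k := by
  have hc2' : (0:ℝ) ≤ c 2 := hc2.le
  cases k with
  | zero =>
    have : |c 2 * s ^ 2 / ((2).factorial : ℝ)| = c 2 * s ^ 2 / 2 := by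
      rw [abs_of_nonneg]
      · norm_num [Nat.factorial]
      · positivity
    simpa using this.le
  | succ j =>
    have hg := hgrowth (j + 3) (by omega)
    have e1 : (j + 3) - 2 = j + 1 := by omega
    have e2 : (c 2) ^ (((j + 3 : ℕ) : ℝ) / 2) = c 2 * Real.sqrt (c 2) ^ (j + 1) := by
      have e : ((j + 3 : ℕ) : ℝ) / 2 = 1 + (1 / 2) * ((j + 1 : ℕ) : ℝ) := by push_cast; ring
      rw [e, Real.rpow_add hc2, Real.rpow_one, Real.sqrt_eq_rpow,
        ← Real.rpow_natCast (c 2 ^ (1/2 : ℝ)) (j + 1), ← Real.rpow_mul hc2']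
    rw [e1, e2] at hg
    have hfac : (0:ℝ) < ((j + 3).factorial : ℝ) := by positivity
    have habs : |c (j + 3) * s ^ (j + 3) / ((j + 3).factorial : ℝ)|
        = |c (j + 3)| * s ^ (j + 3) / ((j + 3).factorial : ℝ) := by
      rw [abs_div, abs_mul, abs_of_nonneg (pow_nonneg hs0 _), abs_of_pos hfac]
    have hβ0 : 0 ≤ α * Real.sqrt (c 2) * s := by positivity
    have hpow : (α * Real.sqrt (c 2) * s) ^ (j + 1) ≤ (1 / 4 : ℝ) ^ (j + 1) :=
      pow_le_pow_left₀ hβ0 hβ _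
    have step1 : |c (j + 3)| * s ^ (j + 3) / ((j + 3).factorial : ℝ)
        ≤ ((1 / 2) * ((j + 3).factorial : ℝ) * α ^ (j + 1) * (c 2 * Real.sqrt (c 2) ^ (j + 1)))
            * s ^ (j + 3) / ((j + 3).factorial : ℝ) := by
      gcongr
    have step2 : ((1 / 2) * ((j + 3).factorial : ℝ) * α ^ (j + 1) * (c 2 * Real.sqrt (c 2) ^ (j + 1)))
            * s ^ (j + 3) / ((j + 3).factorial : ℝ)
        = (c 2 * s ^ 2 / 2) * (α * Real.sqrt (c 2) * s) ^ (j + 1) := by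
      field_simp
      ring
    have : |c ((j + 1) + 2)| * s ^ ((j + 1) + 2) / (((j + 1) + 2).factorial : ℝ)
        ≤ (c 2 * s ^ 2 / 2) * (1 / 4) ^ (j + 1) := by
      show |c (j + 3)| * s ^ (j + 3) / ((j + 3).factorial : ℝ) ≤ _
      calc |c (j + 3)| * s ^ (j + 3) / ((j + 3).factorial : ℝ)
          ≤ _ := step1
        _ = (c 2 * s ^ 2 / 2) * (α * Real.sqrt (c 2) * s) ^ (j + 1) := step2
        _ ≤ (c 2 * s ^ 2 / 2) * (1 / 4) ^ (j + 1) := by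
            gcongr
    rw [show (j + 1) + 2 = j + 3 from rfl] at this ⊢
    rw [habs]
    simpa using this

lemma asc_key (α : ℝ) (hα : 0 < α) (c : ℕ → ℝ) (hc2 : 0 < c 2)
    (hgrowth : ∀ k : ℕ, 3 ≤ k →
      |c k| ≤ (1 / 2) * (k.factorial : ℝ) * α ^ (k - 2) * (c 2) ^ ((k : ℝ) / 2))
    (h : ℝ → ℝ)
    (hrep : ∀ s ∈ Set.Icc (0 : ℝ) 1,
      Summable (fun k : ℕ => |c (k + 2) * s ^ (k + 2) / ((k + 2).factorial : ℝ)|) →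
      h s = ∑' k : ℕ, c (k + 2) * s ^ (k + 2) / ((k + 2).factorial : ℝ))
    (s : ℝ) (hs0 : 0 ≤ s) (hs1 : s ≤ 1)
    (hβ : α * Real.sqrt (c 2) * s ≤ 1 / 4) :
    c 2 * s ^ 2 / 3 ≤ h s ∧ h s ≤ 2 * (c 2 * s ^ 2) / 3 := by
  set f : ℕ → ℝ := fun k => c (k + 2) * s ^ (k + 2) / ((k + 2).factorial : ℝ) with hf
  have hbd : ∀ k, |f k| ≤ (c 2 * s ^ 2 / 2) * (1 / 4) ^ k :=
    fun k => asc_bound_term α hα c hc2 hgrowth s hs0 hβ k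
  have hgs : Summable (fun k : ℕ => (c 2 * s ^ 2 / 2) * (1 / 4 : ℝ) ^ k) :=
    (summable_geometric_of_lt_one (by norm_num) (by norm_num)).mul_left _
  have habs : Summable (fun k => |f k|) :=
    Summable.of_nonneg_of_le (fun k => abs_nonneg _) hbd hgs
  have hsum : Summable f := habs.of_abs
  have hhs : h s = ∑' k, f k := hrep s ⟨hs0, hs1⟩ habs
  have hsplit : ∑' k, f k = f 0 + ∑' k, f (k + 1) := Summable.tsum_eq_zero_add hsum
  have hf0 : f 0 = c 2 * s ^ 2 / 2 := by
    simp [hf, Nat.factorial]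
    norm_num
  have htail : |∑' k, f (k + 1)| ≤ c 2 * s ^ 2 / 6 := by
    have h1 : |∑' k, f (k + 1)| ≤ ∑' k, |f (k + 1)| := by
      simpa using norm_tsum_le_tsum_norm (f := fun k => f (k + 1))
        (by simpa [Real.norm_eq_abs, Function.comp_def] using (habs.comp_injective (add_left_injective 1)))
    have h2 : ∑' k, |f (k + 1)| ≤ ∑' k, (c 2 * s ^ 2 / 2) * (1 / 4 : ℝ) ^ (k + 1) := by
      apply Summable.tsum_le_tsum (fun k => hbd (k + 1))
        ((habs.comp_injective (add_left_injective 1)))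
        (hgs.comp_injective (add_left_injective 1))
    have h3 : ∑' k, (c 2 * s ^ 2 / 2) * (1 / 4 : ℝ) ^ (k + 1) = c 2 * s ^ 2 / 6 := by
      have : ∑' k : ℕ, (1 / 4 : ℝ) ^ k = 4 / 3 := by
        rw [tsum_geometric_of_lt_one (by norm_num) (by norm_num)]; norm_num
      calc ∑' k, (c 2 * s ^ 2 / 2) * (1 / 4 : ℝ) ^ (k + 1)
          = ∑' k : ℕ, ((c 2 * s ^ 2 / 8) * (1 / 4 : ℝ) ^ k) := by
            congr 1; funext k; ring
        _ = (c 2 * s ^ 2 / 8) * (4 / 3) := by rw [tsum_mul_left, this]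
        _ = c 2 * s ^ 2 / 6 := by ring
    linarith
  rw [hhs, hsplit, hf0]
  rw [abs_le] at htail
  constructor <;> linarith [htail.1, htail.2]

theorem almost_strong_convexity_cumulant
    (α : ℝ) (hα : 0 < α) (c : ℕ → ℝ) (hc2 : 0 < c 2)
    (hgrowth : ∀ k : ℕ, 3 ≤ k →
      |c k| ≤ (1 / 2) * (k.factorial : ℝ) * α ^ (k - 2) * (c 2) ^ ((k : ℝ) / 2))
    (h : ℝ → ℝ) (hconv : ConvexOn ℝ (Set.Icc (0 : ℝ) 1) h)
    (h0 : h 0 = 0) (hnonneg : ∀ s ∈ Set.Icc (0 : ℝ) 1, 0 ≤ h s)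
    (hrep : ∀ s ∈ Set.Icc (0 : ℝ) 1,
      Summable (fun k : ℕ => |c (k + 2) * s ^ (k + 2) / ((k + 2).factorial : ℝ)|) →
      h s = ∑' k : ℕ, c (k + 2) * s ^ (k + 2) / ((k + 2).factorial : ℝ))
    (hpre : h 1 ≤ 1 / (65 * α ^ 2) ∨ c 2 ≤ 1 / (16 * α ^ 2)) :
    (1 / 4) * c 2 ≤ h 1 ∧ h 1 ≤ (3 / 4) * c 2 := by
  have hsq : Real.sqrt (c 2) ^ 2 = c 2 := Real.sq_sqrt hc2.le
  have hsqpos : 0 < Real.sqrt (c 2) := Real.sqrt_pos.mpr hc2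
  -- main case : c 2 ≤ 1/(16 α²)
  have main : c 2 ≤ 1 / (16 * α ^ 2) →
      (1 / 4) * c 2 ≤ h 1 ∧ h 1 ≤ (3 / 4) * c 2 := by
    intro hcs
    have hβ : α * Real.sqrt (c 2) * 1 ≤ 1 / 4 := by
      have h2 : c 2 * (16 * α ^ 2) ≤ 1 := (le_div_iff₀ (by positivity)).mp hcs
      nlinarith [sq_nonneg (α * Real.sqrt (c 2) - 1 / 4), hsq, hsqpos.le,
        mul_pos hα hsqpos]
    have key := asc_key α hα c hc2 hgrowth h hrep 1 (by norm_num) le_rfl hβ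
    norm_num at key
    exact ⟨by linarith [key.1], by linarith [key.2]⟩
  rcases hpre with h65 | hcs
  · by_cases hcs : c 2 ≤ 1 / (16 * α ^ 2)
    · exact main hcs
    · exfalso
      push_neg at hcs
      set s : ℝ := 1 / (4 * (α * Real.sqrt (c 2))) with hsdef
      have hβpos : 0 < α * Real.sqrt (c 2) := by positivity
      have hbig : 1 / 4 ≤ α * Real.sqrt (c 2) := by
        rw [div_lt_iff₀ (by positivity)] at hcs
        nlinarith [hsqpos, hsq, sq_nonneg (α * Real.sqrt (c 2) - 1/4)]
      have hs0 : 0 < s := by positivity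
      have hs1 : s ≤ 1 := by
        rw [hsdef, div_le_one (by positivity)]
        linarith
      have hβ : α * Real.sqrt (c 2) * s ≤ 1 / 4 := by
        rw [hsdef]
        field_simp
        linarith
      have key := asc_key α hα c hc2 hgrowth h hrep s hs0.le hs1 hβ
      -- h s ≥ c2 s²/3 = 1/(48 α²)
      have hval : c 2 * s ^ 2 = 1 / (16 * α ^ 2) := by
        rw [hsdef]
        field_simp
        nlinarith [hsq]
      -- convexity: h s ≤ s * h 1
      have hcvx := hconv.2 (Set.left_mem_Icc.mpr (by norm_num : (0:ℝ) ≤ 1))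
        (Set.right_mem_Icc.mpr (by norm_num : (0:ℝ) ≤ 1))
        (sub_nonneg.mpr hs1) hs0.le (by ring)
      rw [h0] at hcvx
      simp only [smul_eq_mul, mul_zero, zero_add, mul_one] at hcvx
      have hh1 : 0 ≤ h 1 := hnonneg 1 (by norm_num)
      have : h s ≤ h 1 := le_trans hcvx (by nlinarith)
      rw [hval] at key
      have hcontr : 1 / (48 * α ^ 2) ≤ 1 / (65 * α ^ 2) := by
        calc 1 / (48 * α ^ 2) = 1 / (16 * α ^ 2) / 3 := by ring
          _ ≤ h s := key.1
          _ ≤ h 1 := this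
          _ ≤ 1 / (65 * α ^ 2) := h65
      rw [div_le_div_iff₀ (by positivity) (by positivity)] at hcontr
      nlinarith [sq_nonneg α, hα]
  · exact main hcs
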